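/- For any subset V of S_n, the generalized quotient S_n/V = { w : ℓ(wv) = ℓ(w)+ℓ(v) for all v ∈ V } is closed downward under the left weak order: if u ≤ w in left weak order and w ∈ S_n/V, then u ∈ S_n/V. -/

import Mathlib

/-- The Coxeter length of a permutation of `{1,...,n}`: its number of inversions. -/
def invCount {n : ℕ} (w : Equiv.Perm (Fin n)) : ℕ :=
  (Finset.univ.filter (fun p : Fin n × Fin n => p.1 < p.2 ∧ w p.2 < w p.1)).card

/-- Left weak order: `u ≤ w` iff `ℓ(w) = ℓ(w u⁻¹) + ℓ(u)`. -/
def weakLe {n : ℕ} (u w : Equiv.Perm (Fin n)) : Prop :=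
  invCount w = invCount (w * u⁻¹) + invCount u

/-- Subadditivity of the inversion count: `ℓ(xy) ≤ ℓ(x) + ℓ(y)`. -/
lemma invCount_mul_le {n : ℕ} (x y : Equiv.Perm (Fin n)) :
    invCount (x * y) ≤ invCount x + invCount y := by
  classical
  set A : Finset (Fin n × Fin n) :=
    Finset.univ.filter (fun p : Fin n × Fin n => p.1 < p.2 ∧ (x * y) p.2 < (x * y) p.1) with hA
  have hsplit : (A.filter (fun p => y p.2 < y p.1)).card
      + (A.filter (fun p => ¬ y p.2 < y p.1)).card = A.card :=
    Finset.card_filter_add_card_filter_not _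
  have h1 : (A.filter (fun p => y p.2 < y p.1)).card ≤ invCount y := by
    apply Finset.card_le_card
    intro p hp
    simp only [hA, Finset.mem_filter, Finset.mem_univ, true_and] at hp ⊢
    exact ⟨hp.1.1, hp.2⟩
  have h2 : (A.filter (fun p => ¬ y p.2 < y p.1)).card ≤ invCount x := by
    apply Finset.card_le_card_of_injOn (fun p => (y p.1, y p.2))
    · intro p hp
      simp only [hA, Finset.mem_coe, Finset.mem_filter, Finset.mem_univ, true_and] at hp
      obtain ⟨⟨hlt, hxy⟩, hny⟩ := hp
      simp only [invCount, Finset.mem_coe, Finset.mem_filter, Finset.mem_univ, true_and]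
      constructor
      · rcases lt_trichotomy (y p.1) (y p.2) with h | h | h
        · exact h
        · exact absurd (y.injective h) (ne_of_lt hlt)
        · exact absurd h hny
      · simpa using hxy
    · intro p hp q hq hpq
      have h1 := congrArg Prod.fst hpq
      have h2 := congrArg Prod.snd hpq
      simp only at h1 h2
      exact Prod.ext (y.injective h1) (y.injective h2)
  calc invCount (x * y) = A.card := rfl
    _ = _ + _ := hsplit.symm
    _ ≤ invCount y + invCount x := Nat.add_le_add h1 h2
    _ = invCount x + invCount y := Nat.add_comm _ _

/-- Generalized quotients are downward closed under the left weak order. -/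
theorem generalized_quotient_downward_closed {n : ℕ} (V : Set (Equiv.Perm (Fin n)))
    (u w : Equiv.Perm (Fin n)) (hle : weakLe u w)
    (hw : ∀ v ∈ V, invCount (w * v) = invCount w + invCount v) :
    ∀ v ∈ V, invCount (u * v) = invCount u + invCount v := by
  intro v hv
  have hwv := hw v hv
  unfold weakLe at hle
  have key : invCount (w * v) ≤ invCount (w * u⁻¹) + invCount (u * v) := by
    have : w * v = (w * u⁻¹) * (u * v) := by group
    rw [this]
    exact invCount_mul_le _ _
  have h2 : invCount (u * v) ≤ invCount u + invCount v := invCount_mul_le _ _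
  omega
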